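/- Let M be one of the left Λ-modules M(0,1,0) or M(0,0,1). Then there is no injective Λ-linear map φ : M → Λ with the property that every Λ-linear map ψ : M → Λ factors as ψ = g ∘ φ for some Λ-linear map g : Λ → Λ (that is, no monomorphism M → Λ is a left add(Λ)-approximation). -/

import Mathlib

open CategoryTheory Limits Opposite

/-- The algebra `Λ = Λ(q)` of Ringel–Zhang: a `k`-algebra with distinguished elements
`x, y, z` satisfying the defining relations
`x² = y² = z² = 0`, `yz = 0`, `xy + q·yx = 0`, `xz = zx`, `zy = zx`,
and admitting the `k`-basis `{1, x, y, z, yx, zx}`.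
Any such algebra is canonically isomorphic to the quotient of the free algebra
`k⟨x,y,z⟩` by the two-sided ideal generated by these relations. -/
structure LambdaAlg (k : Type) [Field k] (q : k) (Λ : Type) [Ring Λ] [Algebra k Λ] :
    Type where
  x : Λ
  y : Λ
  z : Λ
  hxx : x * x = 0
  hyy : y * y = 0
  hzz : z * z = 0
  hyz : y * z = 0
  hxy : x * y + q • (y * x) = 0
  hxz : x * z - z * x = 0
  hzy : z * y - z * x = 0
  basis : Module.Basis (Fin 6) k Λ
  hb0 : basis 0 = 1
  hb1 : basis 1 = x
  hb2 : basis 2 = y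
  hb3 : basis 3 = z
  hb4 : basis 4 = y * x
  hb5 : basis 5 = z * x

namespace LambdaAlg

variable {k : Type} [Field k] {q : k} {Λ : Type} [Ring Λ] [Algebra k Λ]

/-- The element `ax + by + cz` of `Λ`. -/
def w (D : LambdaAlg k q Λ) (a b c : k) : Λ := a • D.x + b • D.y + c • D.z

/-- The left ideal `U(a,b,c) = Λ(ax+by+cz) + Λ·yx + Λ·zx` of `Λ`. -/
def U (D : LambdaAlg k q Λ) (a b c : k) : Submodule Λ Λ :=
  Submodule.span Λ {D.w a b c, D.y * D.x, D.z * D.x}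

/-- The left `Λ`-module `M(a,b,c) = Λ/U(a,b,c)`. -/
abbrev M (D : LambdaAlg k q Λ) (a b c : k) : Type := Λ ⧸ D.U a b c

/-- The right ideal `U′(a,b,c) = (ax+by+cz)Λ + yx·Λ + zx·Λ` of `Λ`,
viewed as a `Λᵐᵒᵖ`-submodule of `Λ`. -/
def U' (D : LambdaAlg k q Λ) (a b c : k) : Submodule Λᵐᵒᵖ Λ :=
  Submodule.span Λᵐᵒᵖ {D.w a b c, D.y * D.x, D.z * D.x}

/-- The right `Λ`-module `M′(a,b,c) = Λ/U′(a,b,c)` (a module over `Λᵐᵒᵖ`). -/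
abbrev M' (D : LambdaAlg k q Λ) (a b c : k) : Type := Λ ⧸ D.U' a b c

/-- The `k`-subspace `{m ∈ M : x·m = y·m = z·m = 0}` of a left `Λ`-module `M`;
since `x, y, z` generate `rad Λ` and every simple `Λ`-module is isomorphic to `k`,
this is the socle of `M`. -/
def ann (D : LambdaAlg k q Λ) (M : Type) [AddCommGroup M] [Module k M] [Module Λ M]
    [IsScalarTower k Λ M] : Submodule k M where
  carrier := {m | D.x • m = 0 ∧ D.y • m = 0 ∧ D.z • m = 0}
  add_mem' := by
    rintro a b ⟨h1, h2, h3⟩ ⟨g1, g2, g3⟩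
    simp [smul_add, h1, h2, h3, g1, g2, g3]
  zero_mem' := by simp
  smul_mem' := by
    rintro a m ⟨h1, h2, h3⟩
    refine ⟨?_, ?_, ?_⟩ <;> rw [smul_comm] <;> simp [h1, h2, h3]

/-- The submodule `(rad Λ)·M = x·M + y·M + z·M` of a left `Λ`-module `M`. -/
def radM (D : LambdaAlg k q Λ) (M : Type) [AddCommGroup M] [Module Λ M] :
    Submodule Λ M :=
  Submodule.span Λ
    (Set.range (fun m : M => D.x • m) ∪ Set.range (fun m : M => D.y • m) ∪
      Set.range (fun m : M => D.z • m))

end LambdaAlg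


namespace LambdaAlg

variable {k : Type} [Field k] {q : k} {Λ : Type} [Ring Λ] [Algebra k Λ]
variable (D : LambdaAlg k q Λ)

lemma pxy : D.x * D.y = (-q) • (D.y * D.x) := by
  rw [neg_smul]; exact eq_neg_of_add_eq_zero_left D.hxy
lemma pxz : D.x * D.z = D.z * D.x := sub_eq_zero.mp D.hxz
lemma pzy : D.z * D.y = D.z * D.x := sub_eq_zero.mp D.hzy
lemma pxyx : D.x * (D.y * D.x) = 0 := by
  rw [← mul_assoc, D.pxy, smul_mul_assoc, mul_assoc, D.hxx, mul_zero, smul_zero]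
lemma pxzx : D.x * (D.z * D.x) = 0 := by
  rw [← mul_assoc, D.pxz, mul_assoc, D.hxx, mul_zero]
lemma pyyx : D.y * (D.y * D.x) = 0 := by rw [← mul_assoc, D.hyy, zero_mul]
lemma pyzx : D.y * (D.z * D.x) = 0 := by rw [← mul_assoc, D.hyz, zero_mul]
lemma pzyx : D.z * (D.y * D.x) = 0 := by
  rw [← mul_assoc, D.pzy, mul_assoc, D.hxx, mul_zero]
lemma pzzx : D.z * (D.z * D.x) = 0 := by rw [← mul_assoc, D.hzz, zero_mul]
lemma pyxx : (D.y * D.x) * D.x = 0 := by rw [mul_assoc, D.hxx, mul_zero]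
lemma pzxx : (D.z * D.x) * D.x = 0 := by rw [mul_assoc, D.hxx, mul_zero]
lemma pyxy : (D.y * D.x) * D.y = 0 := by
  rw [mul_assoc, D.pxy, mul_smul_comm, ← mul_assoc, D.hyy, zero_mul, smul_zero]
lemma pzxy : (D.z * D.x) * D.y = 0 := by
  rw [mul_assoc, D.pxy, mul_smul_comm, D.pzyx, smul_zero]
lemma pyxz : (D.y * D.x) * D.z = 0 := by rw [mul_assoc, D.pxz, D.pyzx]
lemma pzxz : (D.z * D.x) * D.z = 0 := by rw [mul_assoc, D.pxz, D.pzzx]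
lemma pyxyx : (D.y * D.x) * (D.y * D.x) = 0 := by rw [← mul_assoc, D.pyxy, zero_mul]
lemma pyxzx : (D.y * D.x) * (D.z * D.x) = 0 := by rw [← mul_assoc, D.pyxz, zero_mul]
lemma pzxyx : (D.z * D.x) * (D.y * D.x) = 0 := by rw [← mul_assoc, D.pzxy, zero_mul]
lemma pzxzx : (D.z * D.x) * (D.z * D.x) = 0 := by rw [← mul_assoc, D.pzxz, zero_mul]

lemma Ly (v : Λ) : D.y * v =
    (D.basis.repr v 0) • D.y + (D.basis.repr v 1) • (D.y * D.x) := by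
  conv_lhs => rw [← D.basis.sum_repr v]
  rw [Fin.sum_univ_six, D.hb0, D.hb1, D.hb2, D.hb3, D.hb4, D.hb5]
  simp [mul_add, mul_smul_comm, D.hyy, D.hyz, D.pyyx, D.pyzx]

lemma Lz (v : Λ) : D.z * v =
    (D.basis.repr v 0) • D.z +
      (D.basis.repr v 1 + D.basis.repr v 2) • (D.z * D.x) := by
  conv_lhs => rw [← D.basis.sum_repr v]
  rw [Fin.sum_univ_six, D.hb0, D.hb1, D.hb2, D.hb3, D.hb4, D.hb5]
  simp [mul_add, mul_smul_comm, D.hzz, D.pzy, D.pzyx, D.pzzx, add_smul]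
  rw [add_assoc]

lemma Lx (v : Λ) : D.x * v =
    (D.basis.repr v 0) • D.x + ((-q) * D.basis.repr v 2) • (D.y * D.x) +
      (D.basis.repr v 3) • (D.z * D.x) := by
  conv_lhs => rw [← D.basis.sum_repr v]
  rw [Fin.sum_univ_six, D.hb0, D.hb1, D.hb2, D.hb3, D.hb4, D.hb5]
  simp [mul_add, mul_smul_comm, D.hxx, D.pxy, D.pxz, D.pxyx, D.pxzx, mul_smul]
  rw [smul_comm]

lemma Lyx (v : Λ) : (D.y * D.x) * v = (D.basis.repr v 0) • (D.y * D.x) := by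
  conv_lhs => rw [← D.basis.sum_repr v]
  rw [Fin.sum_univ_six, D.hb0, D.hb1, D.hb2, D.hb3, D.hb4, D.hb5]
  simp [mul_add, mul_smul_comm, D.pyxx, D.pyxy, D.pyxz, D.pyxyx, D.pyxzx]

lemma Lzx (v : Λ) : (D.z * D.x) * v = (D.basis.repr v 0) • (D.z * D.x) := by
  conv_lhs => rw [← D.basis.sum_repr v]
  rw [Fin.sum_univ_six, D.hb0, D.hb1, D.hb2, D.hb3, D.hb4, D.hb5]
  simp [mul_add, mul_smul_comm, D.pzxx, D.pzxy, D.pzxz, D.pzxyx, D.pzxzx]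

lemma Ry (a : Λ) : a * D.y =
    (D.basis.repr a 0) • D.y + ((-q) * D.basis.repr a 1) • (D.y * D.x) +
      (D.basis.repr a 3) • (D.z * D.x) := by
  conv_lhs => rw [← D.basis.sum_repr a]
  rw [Fin.sum_univ_six, D.hb0, D.hb1, D.hb2, D.hb3, D.hb4, D.hb5]
  simp [add_mul, smul_mul_assoc, D.hyy, D.pxy, D.pzy, D.pyxy, D.pzxy, mul_smul]
  rw [smul_comm]

lemma Rz (a : Λ) : a * D.z =
    (D.basis.repr a 0) • D.z + (D.basis.repr a 1) • (D.z * D.x) := by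
  conv_lhs => rw [← D.basis.sum_repr a]
  rw [Fin.sum_univ_six, D.hb0, D.hb1, D.hb2, D.hb3, D.hb4, D.hb5]
  simp [add_mul, smul_mul_assoc, D.hzz, D.hyz, D.pxz, D.pyxz, D.pzxz]

lemma Ryx (a : Λ) : a * (D.y * D.x) = (D.basis.repr a 0) • (D.y * D.x) := by
  conv_lhs => rw [← D.basis.sum_repr a]
  rw [Fin.sum_univ_six, D.hb0, D.hb1, D.hb2, D.hb3, D.hb4, D.hb5]
  simp [add_mul, smul_mul_assoc, D.pxyx, D.pyyx, D.pzyx, D.pyxyx, D.pzxyx]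

lemma Rzx (a : Λ) : a * (D.z * D.x) = (D.basis.repr a 0) • (D.z * D.x) := by
  conv_lhs => rw [← D.basis.sum_repr a]
  rw [Fin.sum_univ_six, D.hb0, D.hb1, D.hb2, D.hb3, D.hb4, D.hb5]
  simp [add_mul, smul_mul_assoc, D.pxzx, D.pyzx, D.pzzx, D.pyxzx, D.pzxzx]

lemma mem_span_triple {R M : Type*} [Ring R] [AddCommGroup M] [Module R M]
    {a b c v : M} (h : v ∈ Submodule.span R {a, b, c}) :
    ∃ p s r : R, v = p • a + s • b + r • c := by
  rw [show ({a, b, c} : Set M) = insert a {b, c} from rfl,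
    Submodule.mem_span_insert] at h
  obtain ⟨p, w1, hw1, rfl⟩ := h
  rw [show ({b, c} : Set M) = insert b {c} from rfl, Submodule.mem_span_insert] at hw1
  obtain ⟨s, w2, hw2, rfl⟩ := hw1
  rw [Submodule.mem_span_singleton] at hw2
  obtain ⟨r, rfl⟩ := hw2
  exact ⟨p, s, r, (add_assoc _ _ _).symm⟩

lemma case1 (D : LambdaAlg k q Λ) :
    ¬ ∃ φ : D.M 0 1 0 →ₗ[Λ] Λ, Function.Injective φ ∧
        ∀ ψ : D.M 0 1 0 →ₗ[Λ] Λ, ∃ g : Λ →ₗ[Λ] Λ, ψ = g ∘ₗ φ := by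
  rintro ⟨φ, hinj, happ⟩
  have hw : D.w 0 1 0 = D.y := by simp [LambdaAlg.w]
  set u := φ (Submodule.Quotient.mk 1) with hu
  have hφ : ∀ a : Λ, φ (Submodule.Quotient.mk a) = a * u := by
    intro a
    have h1 : (Submodule.Quotient.mk a : D.M 0 1 0) =
        a • (Submodule.Quotient.mk 1) := by
      rw [← Submodule.Quotient.mk_smul, smul_eq_mul, mul_one]
    rw [h1, map_smul, smul_eq_mul, hu]
  have hyU : D.y ∈ D.U 0 1 0 := by
    rw [LambdaAlg.U, ← hw]; exact Submodule.subset_span (by simp)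
  have hyu : D.y * u = 0 := by
    rw [← hφ, (Submodule.Quotient.mk_eq_zero _).mpr hyU, map_zero]
  rw [D.Ly u] at hyu
  have hc0 : D.basis.repr u 0 = 0 := by
    have h := congrArg (fun t => D.basis.repr t 2) hyu
    simp only [← D.hb4] at h
    simp only [← D.hb2] at h
    simpa [Finsupp.single_apply] using h
  have hc1 : D.basis.repr u 1 = 0 := by
    have h := congrArg (fun t => D.basis.repr t 4) hyu
    simp only [← D.hb4] at h
    simp only [← D.hb2] at h
    simpa [Finsupp.single_apply] using h
  have hc2 : D.basis.repr u 2 ≠ 0 := by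
    intro h2
    have hzu : D.z * u = 0 := by rw [D.Lz u, hc0, hc1, h2]; simp
    have hzU : D.z ∈ D.U 0 1 0 := by
      rw [← Submodule.Quotient.mk_eq_zero]
      apply hinj
      rw [hφ, hzu, map_zero]
    rw [LambdaAlg.U, hw] at hzU
    obtain ⟨p, s, r, hpqr⟩ := mem_span_triple hzU
    rw [smul_eq_mul, smul_eq_mul, smul_eq_mul, D.Ry, D.Ryx, D.Rzx] at hpqr
    have h := congrArg (fun t => D.basis.repr t 3) hpqr
    simp only [← D.hb4, ← D.hb5] at h
    simp only [← D.hb2, ← D.hb3] at h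
    simpa [Finsupp.single_apply] using h
  have hker : D.U 0 1 0 ≤ LinearMap.ker (LinearMap.toSpanSingleton Λ Λ D.z) := by
    rw [LambdaAlg.U, Submodule.span_le]
    rintro s hs
    simp only [Set.mem_insert_iff, Set.mem_singleton_iff] at hs
    rcases hs with rfl | rfl | rfl <;>
      simp [LinearMap.mem_ker, LinearMap.toSpanSingleton_apply, smul_eq_mul, hw,
        D.hyz, D.pyxz, D.pzxz]
  obtain ⟨g, hg⟩ := happ ((D.U 0 1 0).liftQ (LinearMap.toSpanSingleton Λ Λ D.z) hker)
  have hz : D.z = u * g 1 := by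
    have h1 := LinearMap.congr_fun hg (Submodule.Quotient.mk 1)
    simp only [LinearMap.comp_apply, Submodule.liftQ_apply,
      LinearMap.toSpanSingleton_apply, one_smul] at h1
    rw [h1, ← hu]
    conv_lhs => rw [← mul_one u, ← smul_eq_mul]
    rw [map_smul, smul_eq_mul]
  have hexp : u = D.basis.repr u 2 • D.y + D.basis.repr u 3 • D.z +
      D.basis.repr u 4 • (D.y * D.x) + D.basis.repr u 5 • (D.z * D.x) := by
    conv_lhs => rw [← D.basis.sum_repr u]
    rw [Fin.sum_univ_six, hc0, hc1, D.hb2, D.hb3, D.hb4, D.hb5]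
    simp
  rw [hexp, add_mul, add_mul, add_mul, smul_mul_assoc, smul_mul_assoc,
    smul_mul_assoc, smul_mul_assoc, D.Ly, D.Lz, D.Lyx, D.Lzx] at hz
  have h2 := congrArg (fun t => D.basis.repr t 2) hz
  have h3 := congrArg (fun t => D.basis.repr t 3) hz
  simp only [← D.hb4, ← D.hb5] at h2 h3
  simp only [← D.hb2, ← D.hb3] at h2 h3
  simp [Finsupp.single_apply] at h2 h3
  rcases h2 with h | h
  · exact hc2 h
  · rw [h, mul_zero] at h3
    exact one_ne_zero h3

lemma case2 (D : LambdaAlg k q Λ) :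
    ¬ ∃ φ : D.M 0 0 1 →ₗ[Λ] Λ, Function.Injective φ ∧
        ∀ ψ : D.M 0 0 1 →ₗ[Λ] Λ, ∃ g : Λ →ₗ[Λ] Λ, ψ = g ∘ₗ φ := by
  rintro ⟨φ, hinj, happ⟩
  have hw : D.w 0 0 1 = D.z := by simp [LambdaAlg.w]
  set u := φ (Submodule.Quotient.mk 1) with hu
  have hφ : ∀ a : Λ, φ (Submodule.Quotient.mk a) = a * u := by
    intro a
    have h1 : (Submodule.Quotient.mk a : D.M 0 0 1) =
        a • (Submodule.Quotient.mk 1) := by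
      rw [← Submodule.Quotient.mk_smul, smul_eq_mul, mul_one]
    rw [h1, map_smul, smul_eq_mul, hu]
  have hzUm : D.z ∈ D.U 0 0 1 := by
    rw [LambdaAlg.U, ← hw]; exact Submodule.subset_span (by simp)
  have hzu : D.z * u = 0 := by
    rw [← hφ, (Submodule.Quotient.mk_eq_zero _).mpr hzUm, map_zero]
  rw [D.Lz u] at hzu
  have hc0 : D.basis.repr u 0 = 0 := by
    have h := congrArg (fun t => D.basis.repr t 3) hzu
    simp only [← D.hb5] at h
    simp only [← D.hb3] at h
    simpa [Finsupp.single_apply] using h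
  have hc1 : D.basis.repr u 1 ≠ 0 := by
    intro h1
    have hyu : D.y * u = 0 := by rw [D.Ly u, hc0, h1]; simp
    have hyU : D.y ∈ D.U 0 0 1 := by
      rw [← Submodule.Quotient.mk_eq_zero]
      apply hinj
      rw [hφ, hyu, map_zero]
    rw [LambdaAlg.U, hw] at hyU
    obtain ⟨p, s, r, hpqr⟩ := mem_span_triple hyU
    rw [smul_eq_mul, smul_eq_mul, smul_eq_mul, D.Rz, D.Ryx, D.Rzx] at hpqr
    have h := congrArg (fun t => D.basis.repr t 2) hpqr
    simp only [← D.hb4, ← D.hb5] at h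
    simp only [← D.hb2, ← D.hb3] at h
    simpa [Finsupp.single_apply] using h
  have hker : D.U 0 0 1 ≤ LinearMap.ker (LinearMap.toSpanSingleton Λ Λ D.z) := by
    rw [LambdaAlg.U, Submodule.span_le]
    rintro s hs
    simp only [Set.mem_insert_iff, Set.mem_singleton_iff] at hs
    rcases hs with rfl | rfl | rfl <;>
      simp [LinearMap.mem_ker, LinearMap.toSpanSingleton_apply, smul_eq_mul, hw,
        D.hzz, D.pyxz, D.pzxz]
  obtain ⟨g, hg⟩ := happ ((D.U 0 0 1).liftQ (LinearMap.toSpanSingleton Λ Λ D.z) hker)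
  have hz : D.z = u * g 1 := by
    have h1 := LinearMap.congr_fun hg (Submodule.Quotient.mk 1)
    simp only [LinearMap.comp_apply, Submodule.liftQ_apply,
      LinearMap.toSpanSingleton_apply, one_smul] at h1
    rw [h1, ← hu]
    conv_lhs => rw [← mul_one u, ← smul_eq_mul]
    rw [map_smul, smul_eq_mul]
  have hexp : u = D.basis.repr u 1 • D.x + D.basis.repr u 2 • D.y +
      D.basis.repr u 3 • D.z +
      D.basis.repr u 4 • (D.y * D.x) + D.basis.repr u 5 • (D.z * D.x) := by
    conv_lhs => rw [← D.basis.sum_repr u]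
    rw [Fin.sum_univ_six, hc0, D.hb1, D.hb2, D.hb3, D.hb4, D.hb5]
    simp
  rw [hexp, add_mul, add_mul, add_mul, add_mul, smul_mul_assoc, smul_mul_assoc,
    smul_mul_assoc, smul_mul_assoc, smul_mul_assoc,
    D.Lyx, D.Lzx, D.Ly, D.Lz, D.Lx] at hz
  have h1c := congrArg (fun t => D.basis.repr t 1) hz
  have h3 := congrArg (fun t => D.basis.repr t 3) hz
  simp only [← D.hb4, ← D.hb5] at h1c h3
  simp only [← D.hb1, ← D.hb2, ← D.hb3] at h1c h3
  simp [Finsupp.single_apply] at h1c h3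
  rcases h1c with h | h
  · exact hc1 h
  · rw [h, mul_zero] at h3
    exact one_ne_zero h3

end LambdaAlg

/-- A module is indecomposable if it is nonzero and is not the direct sum of two
nonzero submodules. -/
def IsIndecomposable (R : Type) [Ring R] (M : Type) [AddCommGroup M] [Module R M] :
    Prop :=
  Nontrivial M ∧
    ∀ N₁ N₂ : Submodule R M, N₁ ⊓ N₂ = ⊥ → N₁ ⊔ N₂ = ⊤ → N₁ = ⊥ ∨ N₂ = ⊥

/-- A module is torsionless if it admits an injective linear map into a finite free
module. -/
def IsTorsionless (R : Type) [Ring R] (M : Type) [AddCommGroup M] [Module R M] : Prop :=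
  ∃ (n : ℕ) (f : M →ₗ[R] (Fin n → R)), Function.Injective f

/-- The canonical evaluation map `M → M** = Hom_{Λᵒᵖ}(Hom_Λ(M, Λ), Λ)`,
sending `m` to `f ↦ f m`. -/
def evalMap (Λ : Type) [Ring Λ] (M : Type) [AddCommGroup M] [Module Λ M] :
    M → ((M →ₗ[Λ] Λ) →ₗ[Λᵐᵒᵖ] Λ) := fun m =>
  { toFun := fun f => f m
    map_add' := fun _ _ => rfl
    map_smul' := fun _ _ => rfl }

/-- The transformation `ω′(a,b,c) = (a, q⁻¹b, −((a+q⁻¹b)/a)·c)` on triples. -/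
def omegaPrime {k : Type} [Field k] (q : k) (t : k × k × k) : k × k × k :=
  (t.1, q⁻¹ * t.2.1, -((t.1 + q⁻¹ * t.2.1) / t.1) * t.2.2)

/-- For `M = M(0,1,0)` or `M(0,0,1)`, no injective `Λ`-linear map `M → Λ` is a
left `add(Λ)`-approximation. -/
theorem statement12 (k : Type) [Field k] (q : k) (hq : q ≠ 0)
    (Λ : Type) [Ring Λ] [Algebra k Λ] (D : LambdaAlg k q Λ) :
    (¬ ∃ φ : D.M 0 1 0 →ₗ[Λ] Λ, Function.Injective φ ∧
        ∀ ψ : D.M 0 1 0 →ₗ[Λ] Λ, ∃ g : Λ →ₗ[Λ] Λ, ψ = g ∘ₗ φ)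
    ∧ (¬ ∃ φ : D.M 0 0 1 →ₗ[Λ] Λ, Function.Injective φ ∧
        ∀ ψ : D.M 0 0 1 →ₗ[Λ] Λ, ∃ g : Λ →ₗ[Λ] Λ, ψ = g ∘ₗ φ) :=
  ⟨D.case1, D.case2⟩
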